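/- Let K ≥ 1, let U be a set, and let ℓ : U × {e_1,…,e_K} → ℝ be symmetric with constant C₀, i.e. ∑_{j=1}^K ℓ(u, e_j) = C₀ for every u ∈ U. Let X be a set, let (x_1,y_1),…,(x_n,y_n) ∈ X × {e_1,…,e_K} be given samples, and let η ∈ ℝ. Then for every function f : X → U, the noise-averaged empirical risk L^η_n(f) = (1/n) ∑_{i=1}^n [ (1 − (K−1)η) ℓ(f(x_i), y_i) + η ∑_{j : e_j ≠ y_i} ℓ(f(x_i), e_j) ] satisfies the identity L^η_n(f) = C₀ η + (1 − ηK) L_n(f), where L_n(f) = (1/n) ∑_{i=1}^n ℓ(f(x_i), y_i). -/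

import Mathlib

open scoped BigOperators

/-- For a loss `ℓ` that is symmetric with constant `C₀` (i.e. `∑_{j=1}^K ℓ(u, e_j) = C₀`
for all `u`, labels identified with indices `j ∈ Fin K`), the noise-averaged empirical
risk satisfies `L^η_n(f) = C₀ η + (1 − ηK) L_n(f)`. -/
theorem noisy_empirical_risk_identity (K n : ℕ) (hK : 1 ≤ K) (hn : 1 ≤ n)
    {X U : Type*} (ℓ : U → Fin K → ℝ) (C₀ : ℝ)
    (hsym : ∀ u : U, ∑ j, ℓ u j = C₀)
    (x : Fin n → X) (y : Fin n → Fin K) (η : ℝ) (f : X → U) :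
    (1 / n : ℝ) * ∑ i, ((1 - ((K : ℝ) - 1) * η) * ℓ (f (x i)) (y i)
        + η * ∑ j ∈ Finset.univ.filter (fun j => j ≠ y i), ℓ (f (x i)) j)
      = C₀ * η + (1 - η * K) * ((1 / n : ℝ) * ∑ i, ℓ (f (x i)) (y i)) := by
  have hterm : ∀ i : Fin n,
      (1 - ((K : ℝ) - 1) * η) * ℓ (f (x i)) (y i)
        + η * ∑ j ∈ Finset.univ.filter (fun j => j ≠ y i), ℓ (f (x i)) j
      = C₀ * η + (1 - η * K) * ℓ (f (x i)) (y i) := by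
    intro i
    have h1 : Finset.univ.filter (fun j => j ≠ y i) = Finset.univ.erase (y i) := by
      ext j; simp [Finset.mem_erase, and_comm]
    rw [h1, Finset.sum_erase_eq_sub (Finset.mem_univ _), hsym]
    ring
  rw [Finset.sum_congr rfl (fun i _ => hterm i), Finset.sum_add_distrib,
    Finset.sum_const, Finset.card_univ, Fintype.card_fin, mul_add, ← Finset.mul_sum]
  have hn' : (n : ℝ) ≠ 0 := by positivity
  field_simp
  rw [nsmul_eq_mul]; ring
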